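/- Regularity of the minus-branch solution of the coupled Lyapunov equations (Proposition 3(i)): define Q_{−,0} := G_c(N,0)^{1/2}S₀^{1/2}(S₀ + (1/2)I − (S₀^{1/2}S_NS₀^{1/2} + (1/4)I)^{1/2})⁻¹S₀^{1/2}G_c(N,0)^{1/2}, let Q_{−,k} satisfy Q_{−,k+1} = A_kQ_{−,k}A_kᵀ − B_kB_kᵀ for k = 0,…,N−1, define P_{−,0} := (εΣ̄₀⁻¹ − Q_{−,0}⁻¹)⁻¹ and let P_{−,k} satisfy P_{−,k+1} = A_kP_{−,k}A_kᵀ + B_kB_kᵀ. Then P_{−,k} and Q_{−,k} are invertible for every k ∈ {0,…,N}, and I + B_kᵀQ_{−,k+1}⁻¹B_k is positive definite for every k ∈ {0,…,N−1}. -/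

import Mathlib

set_option linter.unusedSectionVars false
set_option linter.unusedVariables false
set_option maxHeartbeats 1000000


open Matrix

noncomputable section

/-- `prodAux A l d = A (l+d-1) * ⋯ * A l` (the empty product for `d = 0`). -/
def prodAux {n : ℕ} (A : ℕ → Matrix (Fin n) (Fin n) ℝ) (l : ℕ) :
    ℕ → Matrix (Fin n) (Fin n) ℝ
  | 0 => 1
  | d + 1 => A (l + d) * prodAux A l d

/-- State-transition matrix `Φ(k,l)`: `A_{k-1} ⋯ A_l` for `k > l`, `I` for `k = l`,
and `A_k⁻¹ ⋯ A_{l-1}⁻¹` for `k < l`. -/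
def Phi {n : ℕ} (A : ℕ → Matrix (Fin n) (Fin n) ℝ) (k l : ℕ) :
    Matrix (Fin n) (Fin n) ℝ :=
  if l ≤ k then prodAux A l (k - l) else (prodAux A k (l - k))⁻¹

/-- Reachability Gramian `G_r(k₁,k₀) = Σ_{k=k₀}^{k₁−1} Φ(k₁,k+1) B_k B_kᵀ Φ(k₁,k+1)ᵀ`. -/
def Gr {n m : ℕ} (A : ℕ → Matrix (Fin n) (Fin n) ℝ) (B : ℕ → Matrix (Fin n) (Fin m) ℝ)
    (k₁ k₀ : ℕ) : Matrix (Fin n) (Fin n) ℝ :=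
  ∑ k ∈ Finset.Ico k₀ k₁, Phi A k₁ (k+1) * B k * (B k)ᵀ * (Phi A k₁ (k+1))ᵀ

/-- Controllability Gramian `G_c(k₁,k₀) = Σ_{k=k₀}^{k₁−1} Φ(k₀,k+1) B_k B_kᵀ Φ(k₀,k+1)ᵀ`. -/
def Gc {n m : ℕ} (A : ℕ → Matrix (Fin n) (Fin n) ℝ) (B : ℕ → Matrix (Fin n) (Fin m) ℝ)
    (k₁ k₀ : ℕ) : Matrix (Fin n) (Fin n) ℝ :=
  ∑ k ∈ Finset.Ico k₀ k₁, Phi A k₀ (k+1) * B k * (B k)ᵀ * (Phi A k₀ (k+1))ᵀ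



section HelperSection
variable {ι κ : Type*} [Fintype ι] [DecidableEq ι] [Fintype κ] [DecidableEq κ]


lemma quad_pos {M : Matrix ι ι ℝ} (hM : M.PosDef) {x : ι → ℝ} (hx : x ≠ 0) :
    0 < x ⬝ᵥ M *ᵥ x := by simpa using hM.dotProduct_mulVec_pos hx

lemma quad_nonneg {M : Matrix ι ι ℝ} (hM : M.PosSemidef) (x : ι → ℝ) :
    0 ≤ x ⬝ᵥ M *ᵥ x := by simpa using hM.dotProduct_mulVec_nonneg x

lemma herm_of_symm {M : Matrix ι ι ℝ} (h : Mᵀ = M) : M.IsHermitian := by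
  rw [Matrix.IsHermitian, conjTranspose_eq_transpose_of_trivial]; exact h

lemma symm_of_herm {M : Matrix ι ι ℝ} (h : M.IsHermitian) : Mᵀ = M := by
  rw [Matrix.IsHermitian, conjTranspose_eq_transpose_of_trivial] at h; exact h

lemma posDef_of_quad {M : Matrix ι ι ℝ} (h1 : Mᵀ = M)
    (h2 : ∀ x, x ≠ 0 → 0 < x ⬝ᵥ M *ᵥ x) : M.PosDef :=
  .of_dotProduct_mulVec_pos (herm_of_symm h1) fun x hx => by simpa using h2 x hx

lemma posSemidef_of_quad {M : Matrix ι ι ℝ} (h1 : Mᵀ = M)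
    (h2 : ∀ x, 0 ≤ x ⬝ᵥ M *ᵥ x) : M.PosSemidef :=
  .of_dotProduct_mulVec_nonneg (herm_of_symm h1) fun x => by simpa using h2 x


lemma dot_symm (A : Matrix ι κ ℝ) (x : ι → ℝ) (y : κ → ℝ) :
    x ⬝ᵥ A *ᵥ y = y ⬝ᵥ Aᵀ *ᵥ x := by
  rw [dotProduct_mulVec, ← mulVec_transpose, dotProduct_comm]

lemma quad_conj (C : Matrix ι κ ℝ) (M : Matrix κ κ ℝ) (x : ι → ℝ) :
    x ⬝ᵥ (C * M * Cᵀ) *ᵥ x = (Cᵀ *ᵥ x) ⬝ᵥ M *ᵥ (Cᵀ *ᵥ x) := by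
  have h1 : (C * M * Cᵀ) *ᵥ x = C *ᵥ (M *ᵥ (Cᵀ *ᵥ x)) := by
    simp [mulVec_mulVec, Matrix.mul_assoc]
  rw [h1, dot_symm C x (M *ᵥ (Cᵀ *ᵥ x)), dotProduct_comm]

lemma cs_psd {T : Matrix ι ι ℝ} (hT : T.PosSemidef) (a b : ι → ℝ) :
    (a ⬝ᵥ T *ᵥ b) ^ 2 ≤ (a ⬝ᵥ T *ᵥ a) * (b ⬝ᵥ T *ᵥ b) := by
  have hsym : b ⬝ᵥ T *ᵥ a = a ⬝ᵥ T *ᵥ b := by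
    rw [dot_symm, symm_of_herm hT.isHermitian]
  have key : ∀ t : ℝ, 0 ≤ (b ⬝ᵥ T *ᵥ b) * t ^ 2 + (2 * (a ⬝ᵥ T *ᵥ b)) * t + (a ⬝ᵥ T *ᵥ a) := by
    intro t
    have h := quad_nonneg hT (a + t • b)
    simp only [add_mulVec, smul_mulVec, mulVec_add, mulVec_smul, dotProduct_add,
      add_dotProduct, dotProduct_smul, smul_dotProduct, smul_eq_mul] at h
    rw [hsym] at h
    nlinarith [h, sq_nonneg t]
  have key' : ∀ t : ℝ, 0 ≤ (b ⬝ᵥ T *ᵥ b) * (t * t) + (2 * (a ⬝ᵥ T *ᵥ b)) * t + (a ⬝ᵥ T *ᵥ a) := by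
    intro t; have := key t; nlinarith [this]
  have := discrim_le_zero key'
  rw [discrim] at this
  nlinarith [this]

lemma psd_kernel {T : Matrix ι ι ℝ} (hT : T.PosSemidef) {y : ι → ℝ}
    (h : y ⬝ᵥ T *ᵥ y = 0) : T *ᵥ y = 0 := by
  have := hT.dotProduct_mulVec_zero_iff y
  simp only [star_trivial] at this
  exact this.mp h

lemma posDef_conj {M : Matrix ι ι ℝ} (hM : M.PosDef) {C : Matrix ι ι ℝ}
    (hC : IsUnit C.det) : (C * M * Cᵀ).PosDef := by
  refine posDef_of_quad ?_ ?_
  · rw [transpose_mul, transpose_mul, transpose_transpose, symm_of_herm hM.isHermitian,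
      Matrix.mul_assoc]
  · intro x hx
    rw [quad_conj]
    refine quad_pos hM fun h => hx ?_
    have hCT : IsUnit (Cᵀ).det := by rwa [det_transpose]
    have := Matrix.mulVec_injective_iff_isUnit.mpr (isUnit_iff_isUnit_det _ |>.2 hCT)
    have h0 : Cᵀ *ᵥ x = Cᵀ *ᵥ 0 := by simpa using h
    exact this h0

lemma pd_det {M : Matrix ι ι ℝ} (hM : M.PosDef) : IsUnit M.det := hM.det_pos.ne'.isUnit

lemma dot_self_pos {x : ι → ℝ} (hx : x ≠ 0) : 0 < x ⬝ᵥ x := by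
  have := dotProduct_self_star_pos_iff (v := x)
  simpa using this.mpr hx

lemma dot_mulVec_comm {M : Matrix ι ι ℝ} (h : Mᵀ = M) (x y : ι → ℝ) :
    x ⬝ᵥ M *ᵥ y = y ⬝ᵥ M *ᵥ x := by rw [dot_symm, h]

lemma mulVec_cancel {M : Matrix ι ι ℝ} (h : IsUnit M.det) (x : ι → ℝ) :
    M⁻¹ *ᵥ (M *ᵥ x) = x := by
  rw [mulVec_mulVec, Matrix.nonsing_inv_mul _ h, one_mulVec]

lemma mulVec_cancel' {M : Matrix ι ι ℝ} (h : IsUnit M.det) (x : ι → ℝ) :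
    M *ᵥ (M⁻¹ *ᵥ x) = x := by
  rw [mulVec_mulVec, Matrix.mul_nonsing_inv _ h, one_mulVec]

/-- If `G ≻ 0`, `G' ⪰ 0`, `G − G' ⪰ 0` then `G' G⁻¹ G' ⪯ G'` in quadratic-form language. -/
lemma key_ineq {G G' : Matrix ι ι ℝ} (hG : G.PosDef) (hG' : G'.PosSemidef)
    (hGG' : (G - G').PosSemidef) (x : ι → ℝ) :
    (G' *ᵥ x) ⬝ᵥ G⁻¹ *ᵥ (G' *ᵥ x) ≤ x ⬝ᵥ G' *ᵥ x := by
  have hGs := symm_of_herm hG.isHermitian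
  have hG's := symm_of_herm hG'.isHermitian
  have hGdet : IsUnit G.det := pd_det hG
  set v := G' *ᵥ x with hv
  set p := G⁻¹ *ᵥ v with hp
  have hGp : G *ᵥ p = v := mulVec_cancel' hGdet v
  have f1 : 0 ≤ (x - p) ⬝ᵥ G' *ᵥ (x - p) := quad_nonneg hG' _
  have f1' : (x - p) ⬝ᵥ G' *ᵥ (x - p)
      = x ⬝ᵥ G' *ᵥ x - 2 * (p ⬝ᵥ v) + p ⬝ᵥ G' *ᵥ p := by
    have hc : x ⬝ᵥ G' *ᵥ p = p ⬝ᵥ G' *ᵥ x := dot_mulVec_comm hG's x p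
    simp only [mulVec_sub, dotProduct_sub, sub_dotProduct]
    have : p ⬝ᵥ G' *ᵥ x = p ⬝ᵥ v := rfl
    rw [hc, this]; ring
  have f2 : p ⬝ᵥ G' *ᵥ p ≤ p ⬝ᵥ G *ᵥ p := by
    have := quad_nonneg hGG' p
    simp only [Matrix.sub_mulVec, dotProduct_sub] at this
    linarith
  have f3 : p ⬝ᵥ G *ᵥ p = p ⬝ᵥ v := by rw [hGp]
  have f4 : v ⬝ᵥ G⁻¹ *ᵥ v = p ⬝ᵥ v := by rw [← hp, dotProduct_comm]
  linarith

/-- If `H ≻ 0` and `B Bᵀ ⪯ H` then `Bᵀ H⁻¹ B ⪯ 1` in quadratic-form language. -/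
lemma key_ineq2 {H : Matrix ι ι ℝ} {B : Matrix ι κ ℝ} (hH : H.PosDef)
    (hHB : (H - B * Bᵀ).PosSemidef) (u : κ → ℝ) :
    (B *ᵥ u) ⬝ᵥ H⁻¹ *ᵥ (B *ᵥ u) ≤ u ⬝ᵥ u := by
  have hHs := symm_of_herm hH.isHermitian
  have hHdet : IsUnit H.det := pd_det hH
  set v := B *ᵥ u with hv
  set p := H⁻¹ *ᵥ v with hp
  have hHp : H *ᵥ p = v := mulVec_cancel' hHdet v
  set w := Bᵀ *ᵥ p with hw
  have f1 : 0 ≤ (u - w) ⬝ᵥ (u - w) := by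
    have := dotProduct_star_self_nonneg (u - w)
    simpa using this
  have f2 : w ⬝ᵥ u = p ⬝ᵥ v := by
    rw [hw, dotProduct_comm, dot_symm, transpose_transpose]
  have f3 : w ⬝ᵥ w = p ⬝ᵥ (B * Bᵀ) *ᵥ p := by
    conv_rhs => rw [← Matrix.mulVec_mulVec, dot_symm B p (Bᵀ *ᵥ p)]
  have f4 : p ⬝ᵥ (B * Bᵀ) *ᵥ p ≤ p ⬝ᵥ H *ᵥ p := by
    have := quad_nonneg hHB p
    simp only [Matrix.sub_mulVec, dotProduct_sub] at this
    linarith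
  have f5 : p ⬝ᵥ H *ᵥ p = p ⬝ᵥ v := by rw [hHp]
  have f6 : v ⬝ᵥ H⁻¹ *ᵥ v = p ⬝ᵥ v := by rw [← hp, dotProduct_comm]
  have f1' : (u - w) ⬝ᵥ (u - w) = u ⬝ᵥ u - 2 * (w ⬝ᵥ u) + w ⬝ᵥ w := by
    simp only [dotProduct_sub, sub_dotProduct]
    rw [dotProduct_comm w u]; ring
  linarith

/-- Invertibility of `A₀ - G'` (Lemma L1). -/
lemma ml_inv {A₀ G G' : Matrix ι ι ℝ} (hA₀s : A₀ᵀ = A₀) (hA₀ : IsUnit A₀.det)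
    (hG : G.PosDef) (hE : (G⁻¹ - A₀⁻¹).PosDef) (hG' : G'.PosSemidef)
    (hGG' : (G - G').PosSemidef) : IsUnit (A₀ - G').det := by
  rw [isUnit_iff_ne_zero]
  intro hdet
  obtain ⟨x, hx, hx0⟩ := (Matrix.exists_mulVec_eq_zero_iff).mpr hdet
  have hxv : A₀ *ᵥ x = G' *ᵥ x := by
    rw [Matrix.sub_mulVec, sub_eq_zero] at hx0
    exact hx0
  by_cases hv0 : A₀ *ᵥ x = 0
  · exact hx (Matrix.mulVec_injective_iff_isUnit.mpr
      (isUnit_iff_isUnit_det _ |>.2 hA₀) (by rw [hv0, mulVec_zero]))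
  · have hpos : 0 < (A₀ *ᵥ x) ⬝ᵥ G⁻¹ *ᵥ (A₀ *ᵥ x) - (A₀ *ᵥ x) ⬝ᵥ A₀⁻¹ *ᵥ (A₀ *ᵥ x) := by
      have := quad_pos hE hv0
      simpa only [Matrix.sub_mulVec, dotProduct_sub] using this
    have h1 : (A₀ *ᵥ x) ⬝ᵥ A₀⁻¹ *ᵥ (A₀ *ᵥ x) = x ⬝ᵥ G' *ᵥ x := by
      rw [mulVec_cancel hA₀ x, hxv, dotProduct_comm]
    have h2 : (A₀ *ᵥ x) ⬝ᵥ G⁻¹ *ᵥ (A₀ *ᵥ x) ≤ x ⬝ᵥ G' *ᵥ x := by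
      rw [hxv]
      exact key_ineq hG hG' hGG' x
    linarith

/-- Strict ordering of inverses (Lemma L2). -/
lemma ml_pd {A₀ G G' : Matrix ι ι ℝ} (hA₀s : A₀ᵀ = A₀) (hA₀ : IsUnit A₀.det)
    (hG : G.PosDef) (hE : (G⁻¹ - A₀⁻¹).PosDef) (hG' : G'.PosSemidef)
    (hD : (G - G').PosDef) : ((G - G')⁻¹ - (A₀ - G')⁻¹).PosDef := by
  have hG's := symm_of_herm hG'.isHermitian
  have hGs := symm_of_herm hG.isHermitian
  set X := A₀ - G' with hXdef
  set D := G - G' with hDdef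
  have hXs : Xᵀ = X := by rw [hXdef, transpose_sub, hA₀s, hG's]
  have hDs : Dᵀ = D := by rw [hDdef, transpose_sub, hGs, hG's]
  have hX : IsUnit X.det := ml_inv hA₀s hA₀ hG hE hG' hD.posSemidef
  have hDdet : IsUnit D.det := pd_det hD
  have hGdet : IsUnit G.det := pd_det hG
  refine posDef_of_quad ?_ ?_
  · rw [transpose_sub, Matrix.transpose_nonsing_inv, Matrix.transpose_nonsing_inv, hXs, hDs]
  intro y hy
  set x := X⁻¹ *ᵥ y with hxdef
  set d := D⁻¹ *ᵥ y with hddef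
  set w := x - d with hwdef
  have hXx : X *ᵥ x = y := mulVec_cancel' hX y
  have hDd : D *ᵥ d = y := mulVec_cancel' hDdet y
  have hx0 : x ≠ 0 := by
    intro h
    rw [h, mulVec_zero] at hXx
    exact hy hXx.symm
  set z := A₀ *ᵥ x with hzdef
  have hz0 : z ≠ 0 := by
    intro h
    exact hx0 (Matrix.mulVec_injective_iff_isUnit.mpr
      (isUnit_iff_isUnit_det _ |>.2 hA₀) (by rw [← hzdef, h, mulVec_zero]))
  -- z = G d + G' w
  have e3 : z = G *ᵥ d + G' *ᵥ w := by
    have : z = y + G' *ᵥ x := by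
      rw [hzdef, ← hXx, hXdef, Matrix.sub_mulVec]
      abel
    rw [this, ← hDd, hDdef, Matrix.sub_mulVec, hwdef, mulVec_sub]
    abel
  -- scalar abbreviations
  set α := d ⬝ᵥ G *ᵥ d
  set β := d ⬝ᵥ G' *ᵥ d
  set γ := x ⬝ᵥ A₀ *ᵥ x
  set δ := x ⬝ᵥ G' *ᵥ x
  set μ := d ⬝ᵥ G' *ᵥ w
  set ν := w ⬝ᵥ G' *ᵥ w
  set ρ := (G' *ᵥ w) ⬝ᵥ G⁻¹ *ᵥ (G' *ᵥ w)
  -- scalar identities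
  have eC : y ⬝ᵥ D⁻¹ *ᵥ y = α - β := by
    rw [← hddef, ← hDd, dotProduct_comm, hDdef, Matrix.sub_mulVec, dotProduct_sub]
  have eD : y ⬝ᵥ X⁻¹ *ᵥ y = γ - δ := by
    rw [← hxdef, ← hXx, dotProduct_comm, hXdef, Matrix.sub_mulVec, dotProduct_sub]
  have hzx : A₀⁻¹ *ᵥ z = x := by rw [hzdef]; exact mulVec_cancel hA₀ x
  have eB : z ⬝ᵥ A₀⁻¹ *ᵥ z = γ := by
    rw [hzx, hzdef, dotProduct_comm]
  have eA : z ⬝ᵥ G⁻¹ *ᵥ z = α + 2 * μ + ρ := by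
    have h1 : G⁻¹ *ᵥ z = d + G⁻¹ *ᵥ (G' *ᵥ w) := by
      rw [e3, mulVec_add, mulVec_cancel hGdet]
    rw [h1]
    nth_rewrite 1 [e3]
    rw [dotProduct_add, add_dotProduct, add_dotProduct]
    have t1 : (G *ᵥ d) ⬝ᵥ d = α := by rw [dotProduct_comm]
    have t2 : (G *ᵥ d) ⬝ᵥ (G⁻¹ *ᵥ (G' *ᵥ w)) = μ := by
      rw [dotProduct_comm, dot_symm, hGs, mulVec_cancel' hGdet]
    have t3 : (G' *ᵥ w) ⬝ᵥ d = μ := by rw [dotProduct_comm]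
    rw [t1, t2, t3]
    ring
  have eE : δ = β + 2 * μ + ν := by
    have hx : x = d + w := by rw [hwdef]; abel
    have : δ = (d + w) ⬝ᵥ G' *ᵥ (d + w) := by rw [← hx]
    rw [this, mulVec_add, dotProduct_add, add_dotProduct, add_dotProduct,
      dot_mulVec_comm hG's w d]
    ring
  have hEz : 0 < z ⬝ᵥ G⁻¹ *ᵥ z - z ⬝ᵥ A₀⁻¹ *ᵥ z := by
    have := quad_pos hE hz0
    simpa only [Matrix.sub_mulVec, dotProduct_sub] using this
  have hrho : ρ ≤ ν := key_ineq hG hG' hD.posSemidef w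
  have goal' : y ⬝ᵥ (D⁻¹ - X⁻¹) *ᵥ y = y ⬝ᵥ D⁻¹ *ᵥ y - y ⬝ᵥ X⁻¹ *ᵥ y := by
    rw [Matrix.sub_mulVec, dotProduct_sub]
  rw [goal', eC, eD]
  rw [eA, eB] at hEz
  linarith

lemma posDef_smul {M : Matrix ι ι ℝ} (hM : M.PosDef) {c : ℝ} (hc : 0 < c) :
    (c • M).PosDef := by
  refine posDef_of_quad ?_ ?_
  · rw [transpose_smul, symm_of_herm hM.isHermitian]
  · intro x hx
    rw [smul_mulVec, dotProduct_smul, smul_eq_mul]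
    exact mul_pos hc (quad_pos hM hx)

/-- If `M` is symmetric invertible and `M⁻¹ ≻ 0` then `M ≻ 0`. -/
lemma posDef_of_inv_posDef {M : Matrix ι ι ℝ} (hMs : Mᵀ = M) (hM : IsUnit M.det)
    (h : M⁻¹.PosDef) : M.PosDef := by
  refine posDef_of_quad hMs ?_
  intro x hx
  have hMx : M *ᵥ x ≠ 0 := fun h0 => hx (Matrix.mulVec_injective_iff_isUnit.mpr
    (isUnit_iff_isUnit_det _ |>.2 hM) (by rw [h0, mulVec_zero]))
  have := quad_pos h hMx
  rwa [mulVec_cancel hM, dotProduct_comm] at this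

/-- If `T ⪰ 0` and `T² ≻ ¼·1` then `T ≻ ½·1`. -/
lemma sqrt_gt_half {T : Matrix ι ι ℝ} (hT : T.PosSemidef)
    (h2 : (T * T - (1/4 : ℝ) • 1).PosDef) : (T - (1/2 : ℝ) • 1).PosDef := by
  have hTs := symm_of_herm hT.isHermitian
  have hP : (T + (1/2 : ℝ) • (1 : Matrix ι ι ℝ)).PosDef :=
    Matrix.PosDef.posSemidef_add hT (posDef_smul Matrix.PosDef.one (by norm_num))
  have hPs := symm_of_herm hP.isHermitian
  have hPdet : IsUnit (T + (1/2 : ℝ) • (1 : Matrix ι ι ℝ)).det := pd_det hP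
  refine posDef_of_quad ?_ ?_
  · rw [transpose_sub, hTs, transpose_smul, transpose_one]
  intro x hx
  set P : Matrix ι ι ℝ := T + (1/2 : ℝ) • 1 with hPdef
  set y := P⁻¹ *ᵥ x with hydef
  have hPy : P *ᵥ y = x := mulVec_cancel' hPdet x
  have hy0 : y ≠ 0 := by
    intro h
    rw [h, mulVec_zero] at hPy
    exact hx hPy.symm
  set t := T *ᵥ y with htdef
  have hxty : x = t + (1/2 : ℝ) • y := by
    rw [← hPy, hPdef, Matrix.add_mulVec, Matrix.smul_mulVec, one_mulVec]
  set e := y ⬝ᵥ y with hedef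
  set s := y ⬝ᵥ t with hsdef
  set q := t ⬝ᵥ t with hqdef
  set c := t ⬝ᵥ T *ᵥ t with hcdef
  have hyTt : y ⬝ᵥ T *ᵥ t = q := by
    rw [dot_symm, hTs]
  have hkey : x ⬝ᵥ (T - (1/2 : ℝ) • 1) *ᵥ x = c + q/2 - s/4 - e/8 := by
    have hstep : (T - (1/2 : ℝ) • 1) *ᵥ x = T *ᵥ t - (1/4 : ℝ) • y := by
      rw [hxty]
      simp only [Matrix.sub_mulVec, mulVec_add, mulVec_smul, Matrix.smul_mulVec,
        one_mulVec, ← htdef]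
      module
    rw [hstep, hxty]
    simp only [dotProduct_sub, add_dotProduct, smul_dotProduct, dotProduct_smul, smul_eq_mul]
    rw [hyTt, show t ⬝ᵥ y = s from by rw [hsdef, dotProduct_comm], ← hedef, ← hcdef]
    ring
  have hq : e/4 < q := by
    have := quad_pos h2 hy0
    have hq2 : y ⬝ᵥ (T * T) *ᵥ y = q := by
      rw [← Matrix.mulVec_mulVec, ← htdef, hyTt]
    rw [Matrix.sub_mulVec, dotProduct_sub, hq2, Matrix.smul_mulVec, one_mulVec,
      dotProduct_smul, ← hedef, smul_eq_mul] at this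
    linarith
  have hcs : q^2 ≤ s * c := by
    have := cs_psd hT y t
    rwa [hyTt] at this
  have hse : s^2 ≤ e * q := by
    have := cs_psd (Matrix.PosSemidef.one (n := ι) (R := ℝ)) y t
    simpa only [one_mulVec, ← hsdef, ← hedef, ← hqdef] using this
  have he : 0 < e := dot_self_pos hy0
  have hs0 : 0 ≤ s := quad_nonneg hT y
  have hs : 0 < s := by
    rcases lt_or_eq_of_le hs0 with h | h
    · exact h
    · exfalso
      have ht0 : t = 0 := by rw [htdef]; exact psd_kernel hT h.symm
      rw [ht0] at hqdef
      simp at hqdef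
      rw [hqdef] at hq
      linarith
  have hcnn : 0 ≤ c := quad_nonneg hT t
  rw [hkey]
  have hs2q : s < 2*q := by nlinarith
  have h1 : 0 < s * (c + q/2 - s/4 - e/8) := by
    nlinarith [hcs, hq, hs, hs2q, mul_lt_mul_of_pos_left hq hs, mul_self_nonneg (2*q - s)]
  nlinarith [h1, hs]

lemma psd_sum {s : Finset ℕ} {f : ℕ → Matrix ι ι ℝ} (h : ∀ i ∈ s, (f i).PosSemidef) :
    (∑ i ∈ s, f i).PosSemidef :=
  Finset.sum_induction f _ (fun _ _ ha hb => ha.add hb) Matrix.PosSemidef.zero h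

lemma psd_mul_transpose_self (C : Matrix ι κ ℝ) : (C * Cᵀ).PosSemidef := by
  refine posSemidef_of_quad ?_ ?_
  · rw [transpose_mul, transpose_transpose]
  · intro x
    have h := quad_conj C (1 : Matrix κ κ ℝ) x
    rw [Matrix.mul_one] at h
    rw [h, one_mulVec]
    have := dotProduct_star_self_nonneg (Cᵀ *ᵥ x)
    simpa using this

lemma psd_term (Cm : Matrix ι ι ℝ) (Bm : Matrix ι κ ℝ) :
    (Cm * Bm * Bmᵀ * Cmᵀ).PosSemidef := by
  have : Cm * Bm * Bmᵀ * Cmᵀ = (Cm * Bm) * (Cm * Bm)ᵀ := by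
    simp only [transpose_mul, Matrix.mul_assoc]
  rw [this]
  exact psd_mul_transpose_self _

lemma pd_of_psd_isUnit {M : Matrix ι ι ℝ} (hM : M.PosSemidef) (hd : IsUnit M.det) :
    M.PosDef := by
  refine posDef_of_quad (symm_of_herm hM.isHermitian) ?_
  intro x hx
  rcases lt_or_eq_of_le (quad_nonneg hM x) with h | h
  · exact h
  · exfalso
    have h0 : M *ᵥ x = 0 := psd_kernel hM h.symm
    exact hx (Matrix.mulVec_injective_iff_isUnit.mpr (isUnit_iff_isUnit_det _ |>.2 hd)
      (by rw [h0, mulVec_zero]))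

lemma psd_conj {M : Matrix ι ι ℝ} (hM : M.PosSemidef) (C : Matrix ι ι ℝ) :
    (C * M * Cᵀ).PosSemidef := by
  have := hM.mul_mul_conjTranspose_same C
  rwa [conjTranspose_eq_transpose_of_trivial] at this

lemma conjT_inv (Φ X : Matrix ι ι ℝ) :
    (Φ * X * Φᵀ)⁻¹ = (Φᵀ)⁻¹ * X⁻¹ * Φ⁻¹ := by
  rw [Matrix.mul_inv_rev, Matrix.mul_inv_rev, Matrix.mul_assoc]

lemma neg_inv' {M : Matrix ι ι ℝ} (h : IsUnit M.det) : (-M)⁻¹ = -(M⁻¹) :=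
  Matrix.inv_eq_right_inv (by rw [neg_mul_neg, Matrix.mul_nonsing_inv _ h])

lemma isUnit_det_neg {M : Matrix ι ι ℝ} (h : IsUnit M.det) : IsUnit (-M).det := by
  rw [Matrix.det_neg]
  exact (isUnit_one.neg.pow _).mul h

/-- The backward-case positive definiteness argument. -/
lemma final_pd_backward {K GR : Matrix ι ι ℝ} {Bk : Matrix ι κ ℝ}
    (hKs : Kᵀ = K) (hGR : GR.PosDef)
    (hsum : (K⁻¹ + GR⁻¹).PosDef) (hBB : (GR - Bk * Bkᵀ).PosSemidef) :
    ((1 : Matrix κ κ ℝ) + Bkᵀ * K⁻¹ * Bk).PosDef := by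
  refine posDef_of_quad ?_ ?_
  · rw [transpose_add, transpose_one, transpose_mul, transpose_mul, transpose_transpose,
      Matrix.transpose_nonsing_inv, hKs, Matrix.mul_assoc]
  intro u hu
  have hq : u ⬝ᵥ ((1 : Matrix κ κ ℝ) + Bkᵀ * K⁻¹ * Bk) *ᵥ u
      = u ⬝ᵥ u + (Bk *ᵥ u) ⬝ᵥ K⁻¹ *ᵥ (Bk *ᵥ u) := by
    rw [add_mulVec, dotProduct_add, one_mulVec]
    congr 1
    have h := quad_conj Bkᵀ K⁻¹ u
    rw [transpose_transpose] at h
    exact h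
  rw [hq]
  have h1 : (Bk *ᵥ u) ⬝ᵥ GR⁻¹ *ᵥ (Bk *ᵥ u) ≤ u ⬝ᵥ u := key_ineq2 hGR hBB u
  by_cases hBu : Bk *ᵥ u = 0
  · rw [hBu]
    simpa using dot_self_pos hu
  · have h2 : 0 < (Bk *ᵥ u) ⬝ᵥ (K⁻¹ + GR⁻¹) *ᵥ (Bk *ᵥ u) := quad_pos hsum hBu
    rw [add_mulVec, dotProduct_add] at h2
    linarith

/-- The forward-case (Woodbury) positive definiteness argument. -/
lemma final_pd_forward {Qk H K Ak : Matrix ι ι ℝ} {Bk : Matrix ι κ ℝ}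
    (hQks : Qkᵀ = Qk) (hQkd : IsUnit Qk.det) (hAkd : IsUnit Ak.det)
    (hK : K = Ak * Qk * Akᵀ - Bk * Bkᵀ) (hKd : IsUnit K.det) (hKs : Kᵀ = K)
    (hH : H.PosDef) (hdiff : (H⁻¹ - Qk⁻¹).PosDef)
    (hCC : (H - (Ak⁻¹ * Bk) * (Ak⁻¹ * Bk)ᵀ).PosSemidef) :
    ((1 : Matrix κ κ ℝ) + Bkᵀ * K⁻¹ * Bk).PosDef := by
  have hAtd : IsUnit (Akᵀ).det := by rwa [Matrix.det_transpose]
  set W := Ak * Qk * Akᵀ with hWdef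
  have hWd : IsUnit W.det := by
    rw [hWdef, Matrix.det_mul, Matrix.det_mul]
    exact (hAkd.mul hQkd).mul hAtd
  have hKW : K + Bk * Bkᵀ = W := by rw [hK]; abel
  have key : Bkᵀ * (K⁻¹ * Bk)
      = Bkᵀ * (W⁻¹ * Bk) + Bkᵀ * (K⁻¹ * (Bk * (Bkᵀ * (W⁻¹ * Bk)))) := by
    conv_lhs => rw [show K⁻¹ * Bk = K⁻¹ * ((K + Bk * Bkᵀ) * (W⁻¹ * Bk)) from by
      rw [hKW, Matrix.mul_nonsing_inv_cancel_left _ _ hWd]]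
    simp only [Matrix.add_mul, Matrix.mul_add, Matrix.mul_assoc,
      Matrix.nonsing_inv_mul_cancel_left _ _ hKd]
  have hMN : ((1 : Matrix κ κ ℝ) + Bkᵀ * K⁻¹ * Bk)
      * ((1 : Matrix κ κ ℝ) - Bkᵀ * W⁻¹ * Bk) = 1 := by
    simp only [Matrix.mul_sub, Matrix.sub_mul, Matrix.mul_add, Matrix.add_mul,
      Matrix.mul_one, Matrix.one_mul, Matrix.mul_assoc]
    rw [← key]
    abel
  have hMd : IsUnit ((1 : Matrix κ κ ℝ) + Bkᵀ * K⁻¹ * Bk).det :=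
    IsUnit.of_mul_eq_one _ (by rw [← Matrix.det_mul, hMN, Matrix.det_one])
  have hMs : ((1 : Matrix κ κ ℝ) + Bkᵀ * K⁻¹ * Bk)ᵀ = 1 + Bkᵀ * K⁻¹ * Bk := by
    rw [transpose_add, transpose_one, transpose_mul, transpose_mul, transpose_transpose,
      Matrix.transpose_nonsing_inv, hKs, Matrix.mul_assoc]
  refine posDef_of_inv_posDef hMs hMd ?_
  rw [Matrix.inv_eq_right_inv hMN]
  -- show (1 - Bᵀ W⁻¹ B).PosDef
  set C := Ak⁻¹ * Bk with hCdef
  have hBWB : Bkᵀ * W⁻¹ * Bk = Cᵀ * Qk⁻¹ * C := by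
    rw [hWdef, conjT_inv, hCdef]
    simp only [transpose_mul, Matrix.transpose_nonsing_inv, Matrix.mul_assoc]
  rw [hBWB]
  refine posDef_of_quad ?_ ?_
  · simp only [transpose_sub, transpose_one, transpose_mul, transpose_transpose,
      Matrix.transpose_nonsing_inv, hQks, Matrix.mul_assoc]
  intro u hu
  have hq : u ⬝ᵥ ((1 : Matrix κ κ ℝ) - Cᵀ * Qk⁻¹ * C) *ᵥ u
      = u ⬝ᵥ u - (C *ᵥ u) ⬝ᵥ Qk⁻¹ *ᵥ (C *ᵥ u) := by
    rw [Matrix.sub_mulVec, dotProduct_sub, one_mulVec]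
    congr 1
    have h := quad_conj Cᵀ Qk⁻¹ u
    rw [transpose_transpose] at h
    exact h
  rw [hq]
  have h1 : (C *ᵥ u) ⬝ᵥ H⁻¹ *ᵥ (C *ᵥ u) ≤ u ⬝ᵥ u := key_ineq2 hH hCC u
  by_cases hCu : C *ᵥ u = 0
  · rw [hCu]
    simpa using dot_self_pos hu
  · have h2 : 0 < (C *ᵥ u) ⬝ᵥ (H⁻¹ - Qk⁻¹) *ᵥ (C *ᵥ u) := quad_pos hdiff hCu
    rw [Matrix.sub_mulVec, dotProduct_sub] at h2
    linarith

end HelperSection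

section Trans
variable {n m : ℕ} (A : ℕ → Matrix (Fin n) (Fin n) ℝ) (B : ℕ → Matrix (Fin n) (Fin m) ℝ)

lemma prodAux_zero : prodAux A 0 0 = 1 := rfl

lemma prodAux_comp (l d : ℕ) :
    prodAux A l d * prodAux A 0 l = prodAux A 0 (l + d) := by
  induction d with
  | zero => simp [prodAux]
  | succ d ih =>
    show (A (l + d) * prodAux A l d) * prodAux A 0 l = prodAux A 0 (l + (d + 1))
    rw [Matrix.mul_assoc, ih, show l + (d + 1) = (l + d) + 1 by omega]
    show _ = A (0 + (l + d)) * prodAux A 0 (l + d)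
    rw [Nat.zero_add]

lemma prodAux_succ0 (k : ℕ) : prodAux A 0 (k + 1) = A k * prodAux A 0 k := by
  show A (0 + k) * prodAux A 0 k = _
  rw [Nat.zero_add]

lemma Phi_down {k l : ℕ} (h : l ≤ k) (hl : IsUnit (prodAux A 0 l).det) :
    Phi A k l = prodAux A 0 k * (prodAux A 0 l)⁻¹ := by
  rw [Phi, if_pos h]
  have hc := prodAux_comp A l (k - l)
  rw [show l + (k - l) = k by omega] at hc
  rw [← hc, Matrix.mul_nonsing_inv_cancel_right _ _ hl]

lemma Phi_up {l : ℕ} (hl : 0 < l) : Phi A 0 l = (prodAux A 0 l)⁻¹ := by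
  rw [Phi, if_neg (by omega), Nat.sub_zero]

lemma Gc_zero : Gc A B 0 0 = 0 := by simp [Gc]

lemma Gc_succ (k : ℕ) : Gc A B (k+1) 0 = Gc A B k 0
    + Phi A 0 (k+1) * B k * (B k)ᵀ * (Phi A 0 (k+1))ᵀ := by
  rw [Gc, Gc, Finset.sum_Ico_succ_top (Nat.zero_le _)]

lemma Gc_split {k0 k1 : ℕ} (h : k0 ≤ k1) : Gc A B k1 0 = Gc A B k0 0
    + ∑ j ∈ Finset.Ico k0 k1, Phi A 0 (j+1) * B j * (B j)ᵀ * (Phi A 0 (j+1))ᵀ := by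
  rw [Gc, Gc, Finset.sum_Ico_consecutive _ (Nat.zero_le k0) h]

lemma Gc_psd (k : ℕ) : (Gc A B k 0).PosSemidef := by
  rw [Gc]
  exact psd_sum fun i _ => psd_term _ _

lemma Gc_diff_psd {k0 k1 : ℕ} (h : k0 ≤ k1) :
    (Gc A B k1 0 - Gc A B k0 0).PosSemidef := by
  rw [Gc_split A B h, add_sub_cancel_left]
  exact psd_sum fun i _ => psd_term _ _

lemma Gr_eq {k0 k1 : ℕ} (h : k0 ≤ k1)
    (hinv : ∀ j, j < k1 → IsUnit (prodAux A 0 (j+1)).det) :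
    Gr A B k1 k0 = prodAux A 0 k1 * (Gc A B k1 0 - Gc A B k0 0) * (prodAux A 0 k1)ᵀ := by
  have hsplit := Gc_split A B h
  rw [Gr, show Gc A B k1 0 - Gc A B k0 0
      = ∑ j ∈ Finset.Ico k0 k1, Phi A 0 (j+1) * B j * (B j)ᵀ * (Phi A 0 (j+1))ᵀ by
    rw [hsplit]; abel]
  rw [Finset.mul_sum, Finset.sum_mul]
  refine Finset.sum_congr rfl fun j hj => ?_
  obtain ⟨hj0, hj1⟩ := Finset.mem_Ico.mp hj
  rw [Phi_down A (show j + 1 ≤ k1 by omega) (hinv j hj1), Phi_up A (Nat.succ_pos j)]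
  simp only [transpose_mul, Matrix.mul_assoc]

end Trans


/-- Regularity of the minus-branch solution of the coupled Lyapunov equations. -/
theorem stmt6
    {n m N : ℕ} (hn : 0 < n) (hm : 0 < m) (hN : 0 < N)
    (ε : ℝ) (hε : 0 < ε)
    (A : ℕ → Matrix (Fin n) (Fin n) ℝ) (B : ℕ → Matrix (Fin n) (Fin m) ℝ)
    (hA : ∀ k < N, IsUnit (A k).det)
    (Sig0 SigN : Matrix (Fin n) (Fin n) ℝ)
    (hSig0 : Sig0.PosDef) (hSigN : SigN.PosDef)
    (kr : ℕ) (hkr1 : 1 ≤ kr) (hkrN : kr ≤ N)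
    (hGr1 : ∀ k, kr ≤ k → k ≤ N → IsUnit (Gr A B k 0).det)
    (hGr2 : ∀ k < kr, IsUnit (Gr A B N k).det)
    -- `R` is the positive definite square root of the controllability Gramian `G_c(N,0)`.
    (R : Matrix (Fin n) (Fin n) ℝ) (hR : R.PosDef) (hRR : R * R = Gc A B N 0)
    (S0 SN : Matrix (Fin n) (Fin n) ℝ)
    (hS0 : S0 = ε⁻¹ • (R⁻¹ * Sig0 * R⁻¹))
    (hSN : SN = ε⁻¹ • (R⁻¹ * Phi A 0 N * SigN * (Phi A 0 N)ᵀ * R⁻¹))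
    -- `U` is the positive semidefinite square root of `S₀`.
    (U : Matrix (Fin n) (Fin n) ℝ) (hU : U.PosSemidef) (hUU : U * U = S0)
    -- `T` is the positive semidefinite square root of `S₀^{1/2} S_N S₀^{1/2} + (1/4) I`.
    (T : Matrix (Fin n) (Fin n) ℝ) (hT : T.PosSemidef)
    (hTT : T * T = U * SN * U + (1/4 : ℝ) • 1)
    -- invertibility of `F(S₀,S_N)` and `B(S₀,S_N)`
    (hF : IsUnit (S0 + (1/2 : ℝ) • 1 - T).det)
    (hB : IsUnit (-S0 + (1/2 : ℝ) • 1 + T).det)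
    (Q : ℕ → Matrix (Fin n) (Fin n) ℝ)
    (hQ0 : Q 0 = R * U * (S0 + (1/2 : ℝ) • 1 - T)⁻¹ * U * R)
    (hQrec : ∀ k < N, Q (k+1) = A k * Q k * (A k)ᵀ - B k * (B k)ᵀ)
    (P : ℕ → Matrix (Fin n) (Fin n) ℝ)
    (hP0 : P 0 = (ε • Sig0⁻¹ - (Q 0)⁻¹)⁻¹)
    (hPrec : ∀ k < N, P (k+1) = A k * P k * (A k)ᵀ + B k * (B k)ᵀ) :
    (∀ k ≤ N, IsUnit (P k).det ∧ IsUnit (Q k).det) ∧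
    (∀ k < N,
      ((1 : Matrix (Fin m) (Fin m) ℝ) + (B k)ᵀ * (Q (k+1))⁻¹ * B k).PosDef) := by
  classical
  set FF := S0 + (1/2 : ℝ) • (1 : Matrix (Fin n) (Fin n) ℝ) - T with hFFdef
  set BB := -S0 + (1/2 : ℝ) • (1 : Matrix (Fin n) (Fin n) ℝ) + T with hBBdef
  clear_value FF BB
  have hRd : IsUnit R.det := pd_det hR
  have hRs : Rᵀ = R := symm_of_herm hR.isHermitian
  have hRid : IsUnit (R⁻¹).det := R.isUnit_nonsing_inv_det hRd
  have hRis : (R⁻¹)ᵀ = R⁻¹ := by rw [Matrix.transpose_nonsing_inv, hRs]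
  have hΦ : ∀ k, k ≤ N → IsUnit (prodAux A 0 k).det := by
    intro k
    induction k with
    | zero => intro _; simp [prodAux]
    | succ k ih =>
      intro hk
      rw [prodAux_succ0, Matrix.det_mul]
      exact (hA k (by omega)).mul (ih (by omega))
  have hΦN := hΦ N le_rfl
  have hS0pd : S0.PosDef := by
    rw [hS0, show R⁻¹ * Sig0 * R⁻¹ = R⁻¹ * Sig0 * (R⁻¹)ᵀ from by rw [hRis]]
    exact posDef_smul (posDef_conj hSig0 hRid) (inv_pos.mpr hε)
  have hUs : Uᵀ = U := symm_of_herm hU.isHermitian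
  have hUd : IsUnit U.det := by
    have h : IsUnit (U.det * U.det) := by rw [← Matrix.det_mul, hUU]; exact pd_det hS0pd
    exact isUnit_of_mul_isUnit_left h
  have hUid : IsUnit (U⁻¹).det := U.isUnit_nonsing_inv_det hUd
  have hUis : (U⁻¹)ᵀ = U⁻¹ := by rw [Matrix.transpose_nonsing_inv, hUs]
  have hS0s : S0ᵀ = S0 := by rw [← hUU, transpose_mul, hUs, hUU]
  have hPhiN : Phi A 0 N = (prodAux A 0 N)⁻¹ := Phi_up A hN
  have hSNpd : SN.PosDef := by
    have hC0d : IsUnit (R⁻¹ * Phi A 0 N).det := by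
      rw [Matrix.det_mul, hPhiN]
      exact hRid.mul ((prodAux A 0 N).isUnit_nonsing_inv_det hΦN)
    have he : R⁻¹ * Phi A 0 N * SigN * (Phi A 0 N)ᵀ * R⁻¹
        = (R⁻¹ * Phi A 0 N) * SigN * (R⁻¹ * Phi A 0 N)ᵀ := by
      simp only [transpose_mul, hRis, Matrix.mul_assoc]
    rw [hSN, he]
    exact posDef_smul (posDef_conj hSigN hC0d) (inv_pos.mpr hε)
  have hTs : Tᵀ = T := symm_of_herm hT.isHermitian
  have hT2 : (T * T - (1/4 : ℝ) • 1).PosDef := by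
    rw [hTT, add_sub_cancel_right, show U * SN * U = U * SN * Uᵀ from by rw [hUs]]
    exact posDef_conj hSNpd hUd
  have hTh : (T - (1/2 : ℝ) • 1).PosDef := sqrt_gt_half hT hT2
  have hThd : IsUnit (T - (1/2 : ℝ) • (1 : Matrix (Fin n) (Fin n) ℝ)).det := pd_det hTh
  have hFFs : FFᵀ = FF := by
    rw [hFFdef]
    simp only [transpose_sub, transpose_add, transpose_smul, transpose_one, hS0s, hTs]
  have hBBs : BBᵀ = BB := by
    rw [hBBdef]
    simp only [transpose_add, transpose_neg, transpose_smul, transpose_one, hS0s, hTs]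
  set C := R⁻¹ * U⁻¹ with hCdef
  clear_value C
  have hCt : Cᵀ = U⁻¹ * R⁻¹ := by rw [hCdef, transpose_mul, hRis, hUis]
  have hCd : IsUnit C.det := by rw [hCdef, Matrix.det_mul]; exact hRid.mul hUid
  have hCtd : IsUnit (Cᵀ).det := by rw [Matrix.det_transpose]; exact hCd
  have hCFCd : IsUnit (C * FF * Cᵀ).det := by
    rw [Matrix.det_mul, Matrix.det_mul]; exact (hCd.mul hF).mul hCtd
  have hCti : (Cᵀ)⁻¹ = R * U := by
    rw [hCt, Matrix.mul_inv_rev, Matrix.nonsing_inv_nonsing_inv _ hRd,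
      Matrix.nonsing_inv_nonsing_inv _ hUd]
  have hCi : C⁻¹ = U * R := by
    rw [hCdef, Matrix.mul_inv_rev, Matrix.nonsing_inv_nonsing_inv _ hRd,
      Matrix.nonsing_inv_nonsing_inv _ hUd]
  have hQ0eq : Q 0 = (C * FF * Cᵀ)⁻¹ := by
    rw [hQ0, conjT_inv, hCti, hCi]
    simp only [Matrix.mul_assoc]
  have hQ0d : IsUnit (Q 0).det := by
    rw [hQ0eq]; exact (C * FF * Cᵀ).isUnit_nonsing_inv_det hCFCd
  have hQ0inv : (Q 0)⁻¹ = C * FF * Cᵀ := by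
    rw [hQ0eq, Matrix.nonsing_inv_nonsing_inv _ hCFCd]
  have hQ0s : (Q 0)ᵀ = Q 0 := by
    rw [hQ0eq, Matrix.transpose_nonsing_inv]
    congr 1
    simp only [transpose_mul, transpose_transpose, hFFs, Matrix.mul_assoc]
  have hGpd : (R * R).PosDef := by
    rw [show R * R = R * 1 * Rᵀ from by rw [Matrix.mul_one, hRs]]
    exact posDef_conj Matrix.PosDef.one hRd
  have hGinv : (R * R)⁻¹ = C * (U * U) * Cᵀ := by
    rw [Matrix.mul_inv_rev, hCt, hCdef]
    simp only [Matrix.mul_assoc, Matrix.nonsing_inv_mul_cancel_left _ _ hUd,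
      Matrix.mul_nonsing_inv_cancel_left _ _ hUd]
  have hE0 : ((R * R)⁻¹ - (Q 0)⁻¹).PosDef := by
    rw [hGinv, hQ0inv,
      show C * (U * U) * Cᵀ - C * FF * Cᵀ = C * (U * U - FF) * Cᵀ from by
        rw [Matrix.mul_sub, Matrix.sub_mul],
      show U * U - FF = T - (1/2 : ℝ) • 1 from by rw [hFFdef, hUU]; module]
    exact posDef_conj hTh hCd
  have hSig0e : Sig0 = ε • (R * (U * (U * R))) := by
    have h1 : R * S0 * R = ε⁻¹ • Sig0 := by
      rw [hS0, Matrix.mul_smul, Matrix.smul_mul]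
      congr 1
      simp only [Matrix.mul_assoc, Matrix.mul_nonsing_inv_cancel_left _ _ hRd,
        Matrix.nonsing_inv_mul _ hRd, Matrix.mul_one]
    calc Sig0 = ε • (ε⁻¹ • Sig0) := by rw [smul_smul, mul_inv_cancel₀ hε.ne', one_smul]
    _ = ε • (R * S0 * R) := by rw [h1]
    _ = ε • (R * (U * (U * R))) := by rw [← hUU]; simp only [Matrix.mul_assoc]
  have hSig0inv : Sig0⁻¹ = ε⁻¹ • (R⁻¹ * (U⁻¹ * (U⁻¹ * R⁻¹))) := by
    apply Matrix.inv_eq_right_inv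
    rw [hSig0e, Matrix.smul_mul, Matrix.mul_smul, smul_smul, mul_inv_cancel₀ hε.ne', one_smul]
    simp only [Matrix.mul_assoc, Matrix.mul_nonsing_inv_cancel_left _ _ hRd,
      Matrix.mul_nonsing_inv_cancel_left _ _ hUd, Matrix.mul_nonsing_inv _ hRd,
      Matrix.mul_nonsing_inv _ hUd]
  have hEB : ε • Sig0⁻¹ - (Q 0)⁻¹ = C * BB * Cᵀ := by
    rw [hSig0inv, smul_smul, mul_inv_cancel₀ hε.ne', one_smul, hQ0inv]
    have h1 : R⁻¹ * (U⁻¹ * (U⁻¹ * R⁻¹)) = C * 1 * Cᵀ := by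
      rw [Matrix.mul_one, hCt, hCdef]
      simp only [Matrix.mul_assoc]
    rw [h1, show C * 1 * Cᵀ - C * FF * Cᵀ = C * ((1 : Matrix (Fin n) (Fin n) ℝ) - FF) * Cᵀ from by
      rw [Matrix.mul_sub, Matrix.sub_mul],
      show (1 : Matrix (Fin n) (Fin n) ℝ) - FF = BB from by rw [hFFdef, hBBdef]; module]
  have hCBCd : IsUnit (C * BB * Cᵀ).det := by
    rw [Matrix.det_mul, Matrix.det_mul]; exact (hCd.mul hB).mul hCtd
  have hP0eq : P 0 = (C * BB * Cᵀ)⁻¹ := by rw [hP0, hEB]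
  have hP0d : IsUnit (P 0).det := by
    rw [hP0eq]; exact Matrix.isUnit_nonsing_inv_det _ hCBCd
  have hP0inv : (P 0)⁻¹ = C * BB * Cᵀ := by
    rw [hP0eq, Matrix.nonsing_inv_nonsing_inv _ hCBCd]
  have hP0s : (P 0)ᵀ = P 0 := by
    rw [hP0eq, Matrix.transpose_nonsing_inv]
    congr 1
    simp only [transpose_mul, transpose_transpose, hBBs, Matrix.mul_assoc]
  have hEP : ((R * R)⁻¹ - (-(P 0))⁻¹).PosDef := by
    rw [neg_inv' hP0d, sub_neg_eq_add, hGinv, hP0inv,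
      show C * (U * U) * Cᵀ + C * BB * Cᵀ = C * (U * U + BB) * Cᵀ from by
        rw [Matrix.mul_add, Matrix.add_mul],
      show U * U + BB = (1/2 : ℝ) • 1 + T from by rw [hUU, hBBdef]; module]
    exact posDef_conj
      (Matrix.PosDef.add_posSemidef (posDef_smul Matrix.PosDef.one (by norm_num)) hT) hCd
  have hXNd : IsUnit (Q 0 - R * R).det :=
    ml_inv hQ0s hQ0d hGpd hE0 hGpd.posSemidef (by rw [sub_self]; exact Matrix.PosSemidef.zero)
  have hXNeq : Q 0 - R * R = R * (U * (FF⁻¹ * ((T - (1/2 : ℝ) • 1) * (U⁻¹ * R)))) := by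
    rw [show T - (1/2 : ℝ) • (1 : Matrix (Fin n) (Fin n) ℝ) = U * U - FF from by
      rw [hFFdef, hUU]; module]
    rw [hQ0]
    simp only [Matrix.mul_sub, Matrix.sub_mul, Matrix.mul_assoc,
      Matrix.nonsing_inv_mul_cancel_left _ _ hF, Matrix.mul_nonsing_inv_cancel_left _ _ hUd]
  have hXNinv : (Q 0 - R * R)⁻¹
      = R⁻¹ * (U * ((T - (1/2 : ℝ) • 1)⁻¹ * (FF * (U⁻¹ * R⁻¹)))) := by
    apply Matrix.inv_eq_right_inv
    rw [hXNeq]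
    simp only [Matrix.mul_assoc, Matrix.mul_nonsing_inv_cancel_left _ _ hRd,
      Matrix.mul_nonsing_inv_cancel_left _ _ hUd, Matrix.nonsing_inv_mul_cancel_left _ _ hUd,
      Matrix.mul_nonsing_inv_cancel_left _ _ hThd, Matrix.nonsing_inv_mul_cancel_left _ _ hF,
      Matrix.mul_nonsing_inv _ hRd]
  have hEXN : ((R * R)⁻¹ - (-(Q 0 - R * R))⁻¹).PosDef := by
    rw [neg_inv' hXNd, sub_neg_eq_add]
    have main : (R * R)⁻¹ + (Q 0 - R * R)⁻¹
        = (R⁻¹ * U) * (T - (1/2 : ℝ) • 1)⁻¹ * (R⁻¹ * U)ᵀ := by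
      rw [hXNinv, transpose_mul, hUs, hRis, hGinv, hCt, hCdef]
      have h1 : U * R⁻¹ = ((T - (1/2 : ℝ) • 1) + FF) * (U⁻¹ * R⁻¹) := by
        rw [show (T - (1/2 : ℝ) • (1 : Matrix (Fin n) (Fin n) ℝ)) + FF = U * U from by
          rw [hFFdef, hUU]; module]
        simp only [Matrix.mul_assoc, Matrix.mul_nonsing_inv_cancel_left _ _ hUd]
      conv_rhs => rw [Matrix.mul_assoc, Matrix.mul_assoc, h1]
      simp only [Matrix.add_mul, Matrix.mul_add, Matrix.mul_assoc,
        Matrix.nonsing_inv_mul_cancel_left _ _ hThd,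
        Matrix.mul_nonsing_inv_cancel_left _ _ hThd,
        Matrix.mul_nonsing_inv_cancel_left _ _ hUd,
        Matrix.nonsing_inv_mul_cancel_left _ _ hUd]
    rw [main]
    exact posDef_conj hTh.inv (by rw [Matrix.det_mul]; exact hRid.mul hUd)
  -- representations
  have hg : ∀ k, k < N → prodAux A 0 (k+1)
      * (Phi A 0 (k+1) * B k * (B k)ᵀ * (Phi A 0 (k+1))ᵀ) * (prodAux A 0 (k+1))ᵀ
      = B k * (B k)ᵀ := by
    intro k hk
    have hu := hΦ (k+1) (by omega)
    have hut : IsUnit ((prodAux A 0 (k+1))ᵀ).det := by rw [Matrix.det_transpose]; exact hu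
    rw [Phi_up A (Nat.succ_pos k), Matrix.transpose_nonsing_inv]
    simp only [Matrix.mul_assoc, Matrix.mul_nonsing_inv_cancel_left _ _ hu,
      Matrix.nonsing_inv_mul _ hut, Matrix.mul_one]
  have hQrep : ∀ k, k ≤ N → Q k = prodAux A 0 k * (Q 0 - Gc A B k 0) * (prodAux A 0 k)ᵀ := by
    intro k
    induction k with
    | zero =>
      intro _
      rw [Gc_zero, sub_zero]
      show Q 0 = 1 * Q 0 * (1 : Matrix (Fin n) (Fin n) ℝ)ᵀ
      rw [Matrix.one_mul, transpose_one, Matrix.mul_one]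
    | succ k ih =>
      intro hk
      have hk' : k < N := by omega
      have hstep : prodAux A 0 (k+1) * ((Q 0 - Gc A B k 0)
          - Phi A 0 (k+1) * B k * (B k)ᵀ * (Phi A 0 (k+1))ᵀ) * (prodAux A 0 (k+1))ᵀ
          = A k * (prodAux A 0 k * (Q 0 - Gc A B k 0) * (prodAux A 0 k)ᵀ) * (A k)ᵀ
            - B k * (B k)ᵀ := by
        rw [Matrix.mul_sub, Matrix.sub_mul, hg k hk', prodAux_succ0]
        simp only [transpose_mul, Matrix.mul_assoc]
      rw [hQrec k hk', ih (by omega), Gc_succ,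
        show Q 0 - (Gc A B k 0 + Phi A 0 (k+1) * B k * (B k)ᵀ * (Phi A 0 (k+1))ᵀ)
          = (Q 0 - Gc A B k 0) - Phi A 0 (k+1) * B k * (B k)ᵀ * (Phi A 0 (k+1))ᵀ from by abel]
      exact hstep.symm
  have hPrep : ∀ k, k ≤ N → P k = prodAux A 0 k * (P 0 + Gc A B k 0) * (prodAux A 0 k)ᵀ := by
    intro k
    induction k with
    | zero =>
      intro _
      rw [Gc_zero, add_zero]
      show P 0 = 1 * P 0 * (1 : Matrix (Fin n) (Fin n) ℝ)ᵀ
      rw [Matrix.one_mul, transpose_one, Matrix.mul_one]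
    | succ k ih =>
      intro hk
      have hk' : k < N := by omega
      have hstep : prodAux A 0 (k+1) * ((P 0 + Gc A B k 0)
          + Phi A 0 (k+1) * B k * (B k)ᵀ * (Phi A 0 (k+1))ᵀ) * (prodAux A 0 (k+1))ᵀ
          = A k * (prodAux A 0 k * (P 0 + Gc A B k 0) * (prodAux A 0 k)ᵀ) * (A k)ᵀ
            + B k * (B k)ᵀ := by
        rw [Matrix.mul_add, Matrix.add_mul, hg k hk', prodAux_succ0]
        simp only [transpose_mul, Matrix.mul_assoc]
      rw [hPrec k hk', ih (by omega), Gc_succ,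
        show P 0 + (Gc A B k 0 + Phi A 0 (k+1) * B k * (B k)ᵀ * (Phi A 0 (k+1))ᵀ)
          = (P 0 + Gc A B k 0) + Phi A 0 (k+1) * B k * (B k)ᵀ * (Phi A 0 (k+1))ᵀ from by abel]
      exact hstep.symm
  have hGcpsd : ∀ k, (Gc A B k 0).PosSemidef := Gc_psd A B
  have hGcs : ∀ k, (Gc A B k 0)ᵀ = Gc A B k 0 := fun k => symm_of_herm (hGcpsd k).isHermitian
  have hGcdiff : ∀ k, k ≤ N → (R * R - Gc A B k 0).PosSemidef := by
    intro k hk; rw [hRR]; exact Gc_diff_psd A B hk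
  have hXkd : ∀ k, k ≤ N → IsUnit (Q 0 - Gc A B k 0).det := fun k hk =>
    ml_inv hQ0s hQ0d hGpd hE0 (hGcpsd k) (hGcdiff k hk)
  have hXks : ∀ k, (Q 0 - Gc A B k 0)ᵀ = Q 0 - Gc A B k 0 := fun k => by
    rw [transpose_sub, hQ0s, hGcs]
  have hQkd : ∀ k, k ≤ N → IsUnit (Q k).det := by
    intro k hk
    rw [hQrep k hk, Matrix.det_mul, Matrix.det_mul, Matrix.det_transpose]
    exact ((hΦ k hk).mul (hXkd k hk)).mul (hΦ k hk)
  have hQks : ∀ k, k ≤ N → (Q k)ᵀ = Q k := by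
    intro k hk
    rw [hQrep k hk]
    simp only [transpose_mul, transpose_transpose, hXks k, Matrix.mul_assoc]
  have hnegP0s : (-(P 0))ᵀ = -(P 0) := by rw [transpose_neg, hP0s]
  have hnegP0d : IsUnit (-(P 0)).det := isUnit_det_neg hP0d
  have hYkd : ∀ k, k ≤ N → IsUnit (P 0 + Gc A B k 0).det := by
    intro k hk
    have h := ml_inv hnegP0s hnegP0d hGpd hEP (hGcpsd k) (hGcdiff k hk)
    rw [show -(P 0) - Gc A B k 0 = -(P 0 + Gc A B k 0) from by abel] at h
    have h2 := isUnit_det_neg h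
    rwa [neg_neg] at h2
  have hPkd : ∀ k, k ≤ N → IsUnit (P k).det := by
    intro k hk
    rw [hPrep k hk, Matrix.det_mul, Matrix.det_mul, Matrix.det_transpose]
    exact ((hΦ k hk).mul (hYkd k hk)).mul (hΦ k hk)
  refine ⟨fun k hk => ⟨hPkd k hk, hQkd k hk⟩, ?_⟩
  intro k hk
  have hk1 : k + 1 ≤ N := hk
  have hQk1d := hQkd (k+1) hk1
  have hQk1s := hQks (k+1) hk1
  by_cases hcase : kr ≤ k + 1
  · -- backward case
    have hGrrel : Gr A B (k+1) 0
        = prodAux A 0 (k+1) * Gc A B (k+1) 0 * (prodAux A 0 (k+1))ᵀ := by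
      have h := Gr_eq A B (Nat.zero_le (k+1)) (fun j hj => hΦ (j+1) (by omega))
      rwa [Gc_zero, sub_zero] at h
    have hΦ1 := hΦ (k+1) hk1
    have hΦ1t : IsUnit ((prodAux A 0 (k+1))ᵀ).det := by
      rw [Matrix.det_transpose]; exact hΦ1
    have hΓd : IsUnit (Gc A B (k+1) 0).det := by
      have h := hGr1 (k+1) hcase hk1
      rw [hGrrel, Matrix.det_mul, Matrix.det_mul] at h
      exact isUnit_of_mul_isUnit_right (isUnit_of_mul_isUnit_left h)
    have hΓpd : (Gc A B (k+1) 0).PosDef := pd_of_psd_isUnit (hGcpsd (k+1)) hΓd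
    have hGRpd : (Gr A B (k+1) 0).PosDef := by
      rw [hGrrel]; exact posDef_conj hΓpd hΦ1
    have hnXNs : (-(Q 0 - R * R))ᵀ = -(Q 0 - R * R) := by
      rw [transpose_neg, transpose_sub, hQ0s, show (R * R)ᵀ = R * R from by
        rw [transpose_mul, hRs]]
    have hml := ml_pd hnXNs (isUnit_det_neg hXNd) hGpd hEXN (hGcdiff (k+1) hk1)
      (by rw [sub_sub_cancel]; exact hΓpd)
    rw [sub_sub_cancel,
      show -(Q 0 - R * R) - (R * R - Gc A B (k+1) 0) = -(Q 0 - Gc A B (k+1) 0) from by abel,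
      neg_inv' (hXkd (k+1) hk1), sub_neg_eq_add] at hml
    have hsum : ((Q (k+1))⁻¹ + (Gr A B (k+1) 0)⁻¹).PosDef := by
      rw [hQrep (k+1) hk1, hGrrel, conjT_inv, conjT_inv, ← Matrix.add_mul, ← Matrix.mul_add]
      rw [show (prodAux A 0 (k+1))⁻¹ = (((prodAux A 0 (k+1))ᵀ)⁻¹)ᵀ from by
        rw [← Matrix.transpose_nonsing_inv, transpose_transpose]]
      refine posDef_conj ?_ (Matrix.isUnit_nonsing_inv_det _ hΦ1t)
      rwa [add_comm] at hml
    have hBBpsd : (Gr A B (k+1) 0 - B k * (B k)ᵀ).PosSemidef := by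
      rw [hGrrel, ← hg k hk, ← Matrix.sub_mul, ← Matrix.mul_sub,
        show Gc A B (k+1) 0 - Phi A 0 (k+1) * B k * (B k)ᵀ * (Phi A 0 (k+1))ᵀ
          = Gc A B k 0 from by rw [Gc_succ, add_sub_cancel_right]]
      exact psd_conj (hGcpsd k) _
    exact final_pd_backward hQk1s hGRpd hsum hBBpsd
  · -- forward case
    have hkkr : k < kr := by omega
    have hkN : k ≤ N := by omega
    have hΦk := hΦ k hkN
    have hΦkt : IsUnit ((prodAux A 0 k)ᵀ).det := by rw [Matrix.det_transpose]; exact hΦk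
    have hGrN : Gr A B N k = prodAux A 0 N * (R * R - Gc A B k 0) * (prodAux A 0 N)ᵀ := by
      have h := Gr_eq A B (show k ≤ N by omega) (fun j hj => hΦ (j+1) (by omega))
      rwa [← hRR] at h
    have hDd : IsUnit (R * R - Gc A B k 0).det := by
      have h := hGr2 k hkkr
      rw [hGrN, Matrix.det_mul, Matrix.det_mul] at h
      exact isUnit_of_mul_isUnit_right (isUnit_of_mul_isUnit_left h)
    have hDpd : (R * R - Gc A B k 0).PosDef := pd_of_psd_isUnit (hGcdiff k hkN) hDd
    have hml := ml_pd hQ0s hQ0d hGpd hE0 (hGcpsd k) hDpd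
    have hH : (prodAux A 0 k * (R * R - Gc A B k 0) * (prodAux A 0 k)ᵀ).PosDef :=
      posDef_conj hDpd hΦk
    have hdiff : ((prodAux A 0 k * (R * R - Gc A B k 0) * (prodAux A 0 k)ᵀ)⁻¹
        - (Q k)⁻¹).PosDef := by
      rw [hQrep k hkN, conjT_inv, conjT_inv, ← Matrix.sub_mul, ← Matrix.mul_sub]
      rw [show (prodAux A 0 k)⁻¹ = (((prodAux A 0 k)ᵀ)⁻¹)ᵀ from by
        rw [← Matrix.transpose_nonsing_inv, transpose_transpose]]
      exact posDef_conj hml (Matrix.isUnit_nonsing_inv_det _ hΦkt)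
    have hgk : prodAux A 0 k * (Phi A 0 (k+1) * B k * (B k)ᵀ * (Phi A 0 (k+1))ᵀ)
        * (prodAux A 0 k)ᵀ = ((A k)⁻¹ * B k) * ((A k)⁻¹ * B k)ᵀ := by
      rw [Phi_up A (Nat.succ_pos k), prodAux_succ0, Matrix.mul_inv_rev]
      simp only [transpose_mul, Matrix.transpose_nonsing_inv, Matrix.mul_assoc,
        Matrix.mul_nonsing_inv_cancel_left _ _ hΦk,
        Matrix.nonsing_inv_mul _ hΦkt, Matrix.mul_one]
    have hCC : ((prodAux A 0 k * (R * R - Gc A B k 0) * (prodAux A 0 k)ᵀ)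
        - ((A k)⁻¹ * B k) * ((A k)⁻¹ * B k)ᵀ).PosSemidef := by
      rw [← hgk, ← Matrix.sub_mul, ← Matrix.mul_sub,
        show R * R - Gc A B k 0 - Phi A 0 (k+1) * B k * (B k)ᵀ * (Phi A 0 (k+1))ᵀ
          = R * R - Gc A B (k+1) 0 from by rw [Gc_succ]; abel]
      exact psd_conj (hGcdiff (k+1) hk1) _
    exact final_pd_forward (hQks k hkN) (hQkd k hkN) (hA k hk) (hQrec k hk) hQk1d hQk1s
      hH hdiff hCC



end
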